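/- Let E be a real vector space with nondegenerate symmetric bilinear form, and J₁, J₂ two commuting orthogonal complex structures such that G = J₁J₂ is positive definite (⟨Gv,v⟩ > 0 for all v ≠ 0). Let K ⊂ E be isotropic with J₁K = K. Then, writing K^G for the G-orthogonal complement of K, one has K^G = J₂(K^⊥) and the decomposition K^⊥ = K ⊕ (K^G ∩ K^⊥) is G-orthogonal; moreover K^G ∩ K^⊥ is invariant under both J₁ and J₂. -/

import Mathlib

def IsIsotropicSub {E : Type*} [AddCommGroup E] [Module ℝ E]
    (B : LinearMap.BilinForm ℝ E) (W : Submodule ℝ E) : Prop :=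
  ∀ x ∈ W, ∀ y ∈ W, B x y = 0

/-- The bilinear form `B_G(u,v) = B(Gu, v)` for `G = J₁ ∘ J₂`. -/
def Gform {E : Type*} [AddCommGroup E] [Module ℝ E]
    (B : LinearMap.BilinForm ℝ E) (J1 J2 : E →ₗ[ℝ] E) : LinearMap.BilinForm ℝ E :=
  B.compl₁₂ (J1 ∘ₗ J2) LinearMap.id

/-- Let `E` carry a nondegenerate symmetric bilinear form, with
`J₁, J₂` commuting orthogonal complex structures such that `G = J₁J₂` is positive
definite.  Let `K ⊂ E` be isotropic with `J₁K = K`.  Then, with `K^G` the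
`G`-orthogonal of `K` (the orthogonal for the form `B_G(u,v) = ⟨Gu,v⟩`):
`K^G = J₂(K^⊥)`, the decomposition `K^⊥ = K ⊕ (K^G ∩ K^⊥)` holds and is
`G`-orthogonal, and `K^G ∩ K^⊥` is invariant under both `J₁` and `J₂`. -/
theorem statement_13 {E : Type*} [AddCommGroup E] [Module ℝ E] [FiniteDimensional ℝ E]
    (B : LinearMap.BilinForm ℝ E)
    (hB : B.Nondegenerate) (hsymm : ∀ x y, B x y = B y x)
    (J1 J2 : E →ₗ[ℝ] E)
    (hJ1sq : J1 ∘ₗ J1 = - LinearMap.id) (hJ2sq : J2 ∘ₗ J2 = - LinearMap.id)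
    (hJ1orth : ∀ u v, B (J1 u) (J1 v) = B u v)
    (hJ2orth : ∀ u v, B (J2 u) (J2 v) = B u v)
    (hcomm : J1 ∘ₗ J2 = J2 ∘ₗ J1)
    (hpos : ∀ v : E, v ≠ 0 → 0 < B ((J1 ∘ₗ J2) v) v)
    (K : Submodule ℝ E)
    (hKiso : IsIsotropicSub B K)
    (hJ1K : K.map J1 = K) :
    (Gform B J1 J2).orthogonal K = (B.orthogonal K).map J2 ∧
    B.orthogonal K
      = K ⊔ ((Gform B J1 J2).orthogonal K ⊓ B.orthogonal K) ∧
    K ⊓ ((Gform B J1 J2).orthogonal K ⊓ B.orthogonal K) = ⊥ ∧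
    (∀ x ∈ K, ∀ y ∈ (Gform B J1 J2).orthogonal K ⊓ B.orthogonal K,
      B ((J1 ∘ₗ J2) x) y = 0) ∧
    ((Gform B J1 J2).orthogonal K ⊓ B.orthogonal K).map J1
      = (Gform B J1 J2).orthogonal K ⊓ B.orthogonal K ∧
    ((Gform B J1 J2).orthogonal K ⊓ B.orthogonal K).map J2
      = (Gform B J1 J2).orthogonal K ⊓ B.orthogonal K := by
  -- pointwise versions of the structural hypotheses
  have hJ1sq' : ∀ x, J1 (J1 x) = -x := by
    intro x; have := LinearMap.ext_iff.mp hJ1sq x; simpa using this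
  have hJ2sq' : ∀ x, J2 (J2 x) = -x := by
    intro x; have := LinearMap.ext_iff.mp hJ2sq x; simpa using this
  have hcomm' : ∀ x, J1 (J2 x) = J2 (J1 x) := by
    intro x; have := LinearMap.ext_iff.mp hcomm x; simpa using this
  have skew1 : ∀ u v, B (J1 u) v = - B u (J1 v) := by
    intro u v
    have h := hJ1orth u (J1 v)
    rw [hJ1sq'] at h
    rw [map_neg] at h
    linarith
  have skew2 : ∀ u v, B (J2 u) v = - B u (J2 v) := by
    intro u v
    have h := hJ2orth u (J2 v)
    rw [hJ2sq'] at h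
    rw [map_neg] at h
    linarith
  have hKJ1 : ∀ k ∈ K, J1 k ∈ K := by
    intro k hk
    rw [← hJ1K]; exact Submodule.mem_map_of_mem hk
  have hGapp : ∀ x y, Gform B J1 J2 x y = B (J1 (J2 x)) y := fun x y => rfl
  have memG : ∀ v, v ∈ (Gform B J1 J2).orthogonal K ↔ ∀ k ∈ K, B (J1 (J2 k)) v = 0 := by
    intro v
    simp [LinearMap.BilinForm.mem_orthogonal_iff, LinearMap.BilinForm.IsOrtho, Gform,
      LinearMap.compl₁₂_apply]
  have memB : ∀ v, v ∈ B.orthogonal K ↔ ∀ k ∈ K, B k v = 0 := by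
    intro v
    simp [LinearMap.BilinForm.mem_orthogonal_iff, LinearMap.BilinForm.IsOrtho]
  -- key auxiliary fact : for v ∈ K^G one has B (J2 k) v = 0 for all k ∈ K
  have keyA : ∀ v ∈ (Gform B J1 J2).orthogonal K, ∀ k ∈ K, B (J2 k) v = 0 := by
    intro v hv k hk
    have hk' : -J1 k ∈ K := K.neg_mem (hKJ1 k hk)
    have h := (memG v).mp hv _ hk'
    have : J1 (J2 (-J1 k)) = J2 k := by
      rw [map_neg, map_neg, hcomm' (J1 k), hJ1sq' k]; simp
    rw [this] at h
    exact h
  have hJ2_of_G : ∀ v ∈ (Gform B J1 J2).orthogonal K, J2 v ∈ B.orthogonal K := by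
    intro v hv
    rw [memB]
    intro k hk
    have := skew2 k v
    have h2 : B (J2 k) v = 0 := keyA v hv k hk
    have := skew2 k v
    -- B (J2 k) v = - B k (J2 v)
    linarith [skew2 k v]
  have hJ2_to_G : ∀ w ∈ B.orthogonal K, J2 w ∈ (Gform B J1 J2).orthogonal K := by
    intro w hw
    rw [memG]
    intro k hk
    have h1 : J1 (J2 k) = J2 (J1 k) := hcomm' k
    rw [h1, hJ2orth]
    exact (memB w).mp hw _ (hKJ1 k hk)
  -- (1) K^G = J2 (K^⊥)
  have part1 : (Gform B J1 J2).orthogonal K = (B.orthogonal K).map J2 := by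
    ext v
    constructor
    · intro hv
      refine ⟨-(J2 v), (B.orthogonal K).neg_mem (hJ2_of_G v hv), ?_⟩
      rw [map_neg, hJ2sq', neg_neg]
    · rintro ⟨w, hw, rfl⟩
      exact hJ2_to_G w hw
  -- positivity consequences
  have hpos' : ∀ v : E, Gform B J1 J2 v v = 0 → v = 0 := by
    intro v hv
    by_contra h
    have := hpos v h
    rw [LinearMap.comp_apply] at this
    rw [hGapp] at hv
    linarith
  have hGsymm : ∀ x y, Gform B J1 J2 x y = Gform B J1 J2 y x := by
    intro x y
    rw [hGapp, hGapp]
    calc B (J1 (J2 x)) y = -B (J2 x) (J1 y) := skew1 _ _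
      _ = B x (J2 (J1 y)) := by rw [skew2]; ring
      _ = B x (J1 (J2 y)) := by rw [hcomm']
      _ = B (J1 (J2 y)) x := hsymm _ _
  have hGrefl : (Gform B J1 J2).IsRefl := by
    intro x y h
    rw [hGsymm]; exact h
  have hres : ((Gform B J1 J2).restrict K).Nondegenerate := by
    refine ⟨?_, ?_⟩
    all_goals
      intro ⟨x, hx⟩ h
      have := h ⟨x, hx⟩
      simp only [LinearMap.BilinForm.restrict_apply, LinearMap.domRestrict_apply] at this
      exact Subtype.ext (hpos' x this)
  have hcompl : IsCompl K ((Gform B J1 J2).orthogonal K) :=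
    LinearMap.BilinForm.isCompl_orthogonal_of_restrict_nondegenerate hGrefl hres
  have hKle : K ≤ B.orthogonal K := by
    intro k hk
    rw [memB]
    intro k' hk'
    exact hKiso k' hk' k hk
  -- (3) trivial intersection
  have part3 : K ⊓ ((Gform B J1 J2).orthogonal K ⊓ B.orthogonal K) = ⊥ := by
    rw [eq_bot_iff]
    intro x hx
    obtain ⟨hx1, hx23⟩ := Submodule.mem_inf.mp hx
    obtain ⟨hx2, -⟩ := Submodule.mem_inf.mp hx23
    have : Gform B J1 J2 x x = 0 := (memG x).mp hx2 x hx1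
    simpa using hpos' x this
  -- (2) decomposition of K^⊥
  have part2 : B.orthogonal K = K ⊔ ((Gform B J1 J2).orthogonal K ⊓ B.orthogonal K) := by
    apply le_antisymm
    · intro w hw
      obtain ⟨k, hk, g, hg, hkg⟩ := Submodule.mem_sup.mp
        (hcompl.sup_eq_top ▸ Submodule.mem_top (x := w))
      have hgB : g ∈ B.orthogonal K := by
        have : g = w - k := by rw [← hkg]; abel
        rw [this]
        exact Submodule.sub_mem _ hw (hKle hk)
      exact Submodule.mem_sup.mpr ⟨k, hk, g, Submodule.mem_inf.mpr ⟨hg, hgB⟩, hkg⟩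
    · exact sup_le hKle inf_le_right
  -- (4) G-orthogonality of the decomposition
  have part4 : ∀ x ∈ K, ∀ y ∈ (Gform B J1 J2).orthogonal K ⊓ B.orthogonal K,
      B ((J1 ∘ₗ J2) x) y = 0 := by
    intro x hx y hy
    have := (memG y).mp (Submodule.mem_inf.mp hy).1 x hx
    simpa using this
  -- invariance
  have hJ1D : ∀ x ∈ (Gform B J1 J2).orthogonal K ⊓ B.orthogonal K,
      J1 x ∈ (Gform B J1 J2).orthogonal K ⊓ B.orthogonal K := by
    intro x hx
    obtain ⟨hxG, hxB⟩ := Submodule.mem_inf.mp hx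
    refine Submodule.mem_inf.mpr ⟨?_, ?_⟩
    · rw [memG]
      intro k hk
      rw [hJ1orth (J2 k) x]
      have hJ2x : J2 x ∈ B.orthogonal K := hJ2_of_G x hxG
      have := (memB (J2 x)).mp hJ2x k hk
      linarith [skew2 k x]
    · rw [memB]
      intro k hk
      have h1 : B (J1 k) x = 0 := (memB x).mp hxB _ (hKJ1 k hk)
      linarith [skew1 k x]
  have hJ2D : ∀ x ∈ (Gform B J1 J2).orthogonal K ⊓ B.orthogonal K,
      J2 x ∈ (Gform B J1 J2).orthogonal K ⊓ B.orthogonal K := by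
    intro x hx
    obtain ⟨hxG, hxB⟩ := Submodule.mem_inf.mp hx
    exact Submodule.mem_inf.mpr ⟨hJ2_to_G x hxB, hJ2_of_G x hxG⟩
  have mapeq : ∀ (J : E →ₗ[ℝ] E), (∀ x, J (J x) = -x) →
      (∀ x ∈ (Gform B J1 J2).orthogonal K ⊓ B.orthogonal K,
        J x ∈ (Gform B J1 J2).orthogonal K ⊓ B.orthogonal K) →
      ((Gform B J1 J2).orthogonal K ⊓ B.orthogonal K).map J
        = (Gform B J1 J2).orthogonal K ⊓ B.orthogonal K := by
    intro J hsq hsub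
    apply le_antisymm
    · rintro _ ⟨x, hx, rfl⟩
      exact hsub x hx
    · intro d hd
      exact ⟨-(J d), Submodule.neg_mem _ (hsub d hd), by rw [map_neg, hsq, neg_neg]⟩
  exact ⟨part1, part2, part3, part4, mapeq J1 hJ1sq' hJ1D, mapeq J2 hJ2sq' hJ2D⟩
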